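/- Let n ≥ 2 and let P be an n-dimensional box admitting a partition into boxes each of which has at least one side of positive integer length. Then P has at least one side of positive integer length. -/

import Mathlib

open BoxIntegral

/-- The (closed) set of points of an `n`-dimensional box. -/
def boxSet {n : ℕ} (B : Box (Fin n)) : Set (Fin n → ℝ) :=
  Set.Icc B.lower B.upper

/-- The box `B` has a side whose length belongs to `X`. -/
def hasSideIn {n : ℕ} (X : Set ℝ) (B : Box (Fin n)) : Prop :=
  ∃ i : Fin n, B.upper i - B.lower i ∈ X

/-- `Q` is a partition of `P`: a finite collection of boxes with pairwise disjoint
interiors whose union is `P`. -/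
def isBoxPartition {n k : ℕ} (P : Box (Fin n)) (Q : Fin k → Box (Fin n)) : Prop :=
  (∀ j j' : Fin k, j ≠ j' →
    Disjoint (interior (boxSet (Q j))) (interior (boxSet (Q j')))) ∧
  (⋃ j, boxSet (Q j)) = boxSet P

/-- Property (W_n): for every `n`-dimensional box `P` and every partition of `P`
such that each constituent box has a side with length in `X`, the box `P` itself
has a side with length in `X`. -/
def PropertyW (n : ℕ) (X : Set ℝ) : Prop :=
  ∀ (P : Box (Fin n)) (k : ℕ) (Q : Fin k → Box (Fin n)),
    isBoxPartition P Q → (∀ j, hasSideIn X (Q j)) → hasSideIn X P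

namespace DeBruijnAux

open MeasureTheory Complex

noncomputable def cc : ℂ := 2 * Real.pi * Complex.I

lemma cc_ne : cc ≠ 0 :=
  mul_ne_zero (mul_ne_zero two_ne_zero (Complex.ofReal_ne_zero.2 Real.pi_ne_zero)) Complex.I_ne_zero

lemma oneDim (l u : ℝ) (h : l ≤ u) :
    ∫ t in Set.Icc l u, Complex.exp (cc * t) =
      (Complex.exp (cc * u) - Complex.exp (cc * l)) / cc := by
  rw [MeasureTheory.integral_Icc_eq_integral_Ioc, ← intervalIntegral.integral_of_le h,
    integral_exp_mul_complex cc_ne]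

lemma boxInt {n : ℕ} (B : Box (Fin n)) :
    ∫ x in boxSet B, ∏ i, Complex.exp (cc * x i) =
      ∏ i, ((Complex.exp (cc * B.upper i) - Complex.exp (cc * B.lower i)) / cc) := by
  have hmeas : MeasurableSet (Set.pi Set.univ fun i => Set.Icc (B.lower i) (B.upper i)) :=
    MeasurableSet.univ_pi fun i => measurableSet_Icc
  have hind : (Set.pi Set.univ fun i => Set.Icc (B.lower i) (B.upper i)).indicator
      (fun x => ∏ i, Complex.exp (cc * x i)) =
      fun x => ∏ i, (Set.Icc (B.lower i) (B.upper i)).indicator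
        (fun t : ℝ => Complex.exp (cc * t)) (x i) := by
    funext x
    by_cases hx : x ∈ Set.pi Set.univ fun i => Set.Icc (B.lower i) (B.upper i)
    · rw [Set.indicator_of_mem hx]
      exact Finset.prod_congr rfl fun i _ =>
        (Set.indicator_of_mem (hx i (Set.mem_univ i)) (fun t : ℝ => Complex.exp (cc * t))).symm
    · rw [Set.indicator_of_notMem hx]
      have : ∃ i, x i ∉ Set.Icc (B.lower i) (B.upper i) := by
        by_contra h
        push_neg at h
        exact hx fun i _ => h i
      obtain ⟨i, hi⟩ := this
      exact (Finset.prod_eq_zero (Finset.mem_univ i)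
        (Set.indicator_of_notMem hi _)).symm
  rw [boxSet, ← Set.pi_univ_Icc, ← MeasureTheory.integral_indicator hmeas, hind, MeasureTheory.volume_pi,
    MeasureTheory.integral_fintype_prod_eq_prod (ι := Fin n)
      (fun i => (Set.Icc (B.lower i) (B.upper i)).indicator fun t : ℝ => Complex.exp (cc * t))]
  refine Finset.prod_congr rfl fun i _ => ?_
  rw [MeasureTheory.integral_indicator measurableSet_Icc, oneDim _ _ (B.lower_le_upper i)]

lemma hf_cont {n : ℕ} : Continuous (fun x : Fin n → ℝ => ∏ i, Complex.exp (cc * x i)) := by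
  refine continuous_finset_prod _ fun i _ => Complex.continuous_exp.comp ?_
  exact continuous_const.mul (Complex.continuous_ofReal.comp (continuous_apply i))

/-- Additivity of the integral over a box partition. -/
lemma sumInt {n k : ℕ} (P : Box (Fin n)) (Q : Fin k → Box (Fin n))
    (hpart : isBoxPartition P Q) :
    ∫ x in boxSet P, ∏ i, Complex.exp (cc * x i) =
      ∑ j : Fin k, ∫ x in boxSet (Q j), ∏ i, Complex.exp (cc * x i) := by
  set f : (Fin n → ℝ) → ℂ := fun x => ∏ i, Complex.exp (cc * x i) with hf
  set S : Fin k → Set (Fin n → ℝ) :=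
    fun j => Set.pi Set.univ fun i => Set.Ioo ((Q j).lower i) ((Q j).upper i) with hS
  have hSmeas : ∀ j, MeasurableSet (S j) :=
    fun j => MeasurableSet.univ_pi fun i => measurableSet_Ioo
  have hSint : ∀ j, interior (boxSet (Q j)) = S j := by
    intro j
    rw [boxSet, ← Set.pi_univ_Icc, interior_pi_set Set.finite_univ]
    simp [hS, interior_Icc]
  have hSsub : ∀ j, S j ⊆ boxSet (Q j) := by
    intro j
    rw [boxSet, ← Set.pi_univ_Icc]
    exact Set.pi_mono fun i _ => Set.Ioo_subset_Icc_self
  have hae : ∀ j, S j =ᵐ[volume] boxSet (Q j) := by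
    intro j
    rw [boxSet]
    have : (volume : Measure (Fin n → ℝ)) = Measure.pi fun _ => volume :=
      MeasureTheory.volume_pi
    rw [this]
    exact MeasureTheory.Measure.univ_pi_Ioo_ae_eq_Icc (μ := fun _ : Fin n => (volume : Measure ℝ))
  have hbig : boxSet P =ᵐ[volume] ⋃ j, S j := by
    rw [MeasureTheory.ae_eq_set]
    constructor
    · refine measure_mono_null (fun x hx => ?_)
        (measure_iUnion_null fun j => (MeasureTheory.ae_eq_set.1 (hae j)).2)
      obtain ⟨hx1, hx2⟩ := hx
      rw [← hpart.2] at hx1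
      obtain ⟨j, hj⟩ := Set.mem_iUnion.1 hx1
      exact Set.mem_iUnion.2 ⟨j, hj, fun h => hx2 (Set.mem_iUnion.2 ⟨j, h⟩)⟩
    · have : (⋃ j, S j) \ boxSet P = ∅ := by
        rw [Set.diff_eq_empty, ← hpart.2]
        exact Set.iUnion_mono fun j => hSsub j
      rw [this]; exact measure_empty
  have hInt : ∀ j, IntegrableOn f (boxSet (Q j)) volume :=
    fun j => hf_cont.continuousOn.integrableOn_compact isCompact_Icc
  calc ∫ x in boxSet P, f x = ∫ x in ⋃ j, S j, f x :=
        MeasureTheory.setIntegral_congr_set hbig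
    _ = ∫ x in ⋃ j ∈ Finset.univ, S j, f x := by simp
    _ = ∑ j : Fin k, ∫ x in S j, f x := by
        refine MeasureTheory.integral_biUnion_finset Finset.univ (fun j _ => hSmeas j) ?_
          (fun j _ => (hInt j).mono_set (hSsub j))
        intro j _ j' _ hjj'
        show Disjoint (S j) (S j')
        rw [← hSint j, ← hSint j']
        exact hpart.1 j j' hjj'
    _ = ∑ j : Fin k, ∫ x in boxSet (Q j), f x :=
        Finset.sum_congr rfl fun j _ =>
          MeasureTheory.setIntegral_congr_set (hae j)

end DeBruijnAux

theorem partition_integer_side (n : ℕ) (hn : 2 ≤ n) (P : Box (Fin n))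
    (k : ℕ) (Q : Fin k → Box (Fin n)) (hpart : isBoxPartition P Q)
    (hside : ∀ j, ∃ i : Fin n, ∃ c : ℕ, 0 < c ∧ (Q j).upper i - (Q j).lower i = c) :
    ∃ i : Fin n, ∃ c : ℕ, 0 < c ∧ P.upper i - P.lower i = c := by
  classical
  open DeBruijnAux Complex in
  have hzero : ∀ j, (∫ x in boxSet (Q j), ∏ i, Complex.exp (cc * x i)) = 0 := by
    intro j
    obtain ⟨i, c, hc, heq⟩ := hside j
    rw [boxInt]
    refine Finset.prod_eq_zero (Finset.mem_univ i) ?_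
    have hu : ((Q j).upper i : ℝ) = (Q j).lower i + c := by linarith
    rw [hu]
    have : Complex.exp (cc * ((Q j).lower i + c : ℝ)) = Complex.exp (cc * (Q j).lower i) := by
      rw [Complex.ofReal_add, mul_add, Complex.exp_add]
      have h1 : cc * ((c : ℝ) : ℂ) = (c : ℤ) * (2 * Real.pi * Complex.I) := by
        rw [cc]; push_cast; ring
      rw [h1, Complex.exp_int_mul_two_pi_mul_I, mul_one]
    rw [this, sub_self, zero_div]
  have hP : (∏ i, ((Complex.exp (cc * P.upper i) - Complex.exp (cc * P.lower i)) / cc)) = 0 := by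
    rw [← DeBruijnAux.boxInt, DeBruijnAux.sumInt P Q hpart]
    exact Finset.sum_eq_zero fun j _ => hzero j
  obtain ⟨i, -, hi⟩ := Finset.prod_eq_zero_iff.1 hP
  rw [div_eq_zero_iff] at hi
  rcases hi with hi | hi
  · have hexp : Complex.exp (cc * P.upper i) = Complex.exp (cc * P.lower i) :=
      sub_eq_zero.1 hi
    rw [Complex.exp_eq_exp_iff_exists_int] at hexp
    obtain ⟨m, hm⟩ := hexp
    have hcc : cc * P.upper i - cc * P.lower i = m * cc := by
      rw [hm, cc]; ring
    rw [← mul_sub] at hcc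
    have hdiff : ((P.upper i - P.lower i : ℝ) : ℂ) = (m : ℂ) := by
      have := mul_left_cancel₀ cc_ne (by rw [hcc, mul_comm] : cc * (↑(P.upper i) - ↑(P.lower i)) = cc * m)
      push_cast at this ⊢
      linear_combination this
    have hreal : P.upper i - P.lower i = (m : ℝ) := by exact_mod_cast hdiff
    have hmpos : 0 < m := by
      have := P.lower_lt_upper i
      have : (0 : ℝ) < m := by rw [← hreal]; linarith
      exact_mod_cast this
    exact ⟨i, m.toNat, by omega, by rw [hreal]; norm_cast; omega⟩
  · exact absurd hi cc_ne
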